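/- arXiv:2308.11379 — 4 statements merged into one kernel-verified Lean document; each statement's English description precedes it below -/
import Mathlib

section
/- Suppose a strategy profile σ is an ε-sure Nash equilibrium and every player's utility is bounded in the interval [m, M]. Then σ is an (M−m)ε-Nash equilibrium: for every player i and every deviation σ'_i, the gain u_i(σ'_i, σ_{−i}) − u_i(σ) is at most (M−m)ε. -/
open MeasureTheory

/-- If a strategy profile `σ` is an `ε`-sure Nash equilibrium and every player's
utility takes values in `[m, M]`, then `σ` is an `(M-m)ε`-Nash equilibrium:
for every player `i` and every deviation `σ'ᵢ`, the expected gain from deviating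
is at most `(M - m) * ε`. -/
theorem epsSureNE_is_epsNE
    {Ω : Type*} [MeasurableSpace Ω] (μ : Measure Ω) [IsProbabilityMeasure μ]
    {ι : Type*} [DecidableEq ι] (S : ι → Type*)
    (u : ι → (∀ i, S i) → Ω → ℝ) (σ : ∀ i, S i) (m M ε : ℝ)
    (hε : 0 ≤ ε) (hmM : m ≤ M)
    (hbound : ∀ i τ ω, m ≤ u i τ ω ∧ u i τ ω ≤ M)
    (hint : ∀ i τ, Integrable (u i τ) μ)
    (hsure : ∀ i, ∃ H : Set Ω, MeasurableSet H ∧ 1 - ε ≤ (μ H).toReal ∧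
      ∀ σ'i : S i,
        ∫ ω in H, u i (Function.update σ i σ'i) ω ∂μ ≤ ∫ ω in H, u i σ ω ∂μ) :
    ∀ i, ∀ σ'i : S i,
      ∫ ω, u i (Function.update σ i σ'i) ω ∂μ ≤ (∫ ω, u i σ ω ∂μ) + (M - m) * ε := by
  intro i σ'i
  obtain ⟨H, hH, hμH, hbr⟩ := hsure i
  set τ := Function.update σ i σ'i with hτ
  have hsplit : ∀ f : Ω → ℝ, Integrable f μ →
      ∫ ω, f ω ∂μ = (∫ ω in H, f ω ∂μ) + ∫ ω in Hᶜ, f ω ∂μ := by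
    intro f hf
    rw [← integral_add_compl hH hf]
  have hμc : (μ Hᶜ).toReal ≤ ε := by
    rw [prob_compl_eq_one_sub hH, ENNReal.toReal_sub_of_le (prob_le_one) ENNReal.one_ne_top]
    simp only [ENNReal.toReal_one]
    linarith
  have hup : ∫ ω in Hᶜ, u i τ ω ∂μ ≤ M * (μ Hᶜ).toReal := by
    calc ∫ ω in Hᶜ, u i τ ω ∂μ ≤ ∫ _ω in Hᶜ, M ∂μ := by
          apply setIntegral_mono_on ((hint i τ).integrableOn)
            (integrableOn_const (measure_ne_top μ _)) hH.compl
          intro ω _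
          exact (hbound i τ ω).2
      _ = M * (μ Hᶜ).toReal := by rw [setIntegral_const, smul_eq_mul, measureReal_def]; ring
  have hlo : m * (μ Hᶜ).toReal ≤ ∫ ω in Hᶜ, u i σ ω ∂μ := by
    calc m * (μ Hᶜ).toReal = ∫ _ω in Hᶜ, m ∂μ := by rw [setIntegral_const, smul_eq_mul, measureReal_def]; ring
      _ ≤ ∫ ω in Hᶜ, u i σ ω ∂μ := by
          apply setIntegral_mono_on (integrableOn_const (measure_ne_top μ _))
            ((hint i σ).integrableOn) hH.compl
          intro ω _
          exact (hbound i σ ω).1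
  have h1 := hbr σ'i
  have hM : (M - m) * (μ Hᶜ).toReal ≤ (M - m) * ε :=
    mul_le_mul_of_nonneg_left hμc (by linarith)
  rw [hsplit _ (hint i τ), hsplit _ (hint i σ)]
  nlinarith [ENNReal.toReal_nonneg (a := μ Hᶜ)]
end

section
/- Let δ > 0, α ≥ x + z, z ≤ y ≤ x, and K > 1/(4δ²). Then e^{−2(δ+α−x−z)²K} + e^{−2(δ+α−y+z)²K} ≥ e^{−2(δ+α−x)²K} + e^{−2(δ+α−y)²K}. (Shifting weight z from the smaller value y to the larger value x increases the sum of the two exponential terms.) -/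
open Real Set

private lemma hasDerivAt_exp_sq (K c : ℝ) (t : ℝ) :
    HasDerivAt (fun s : ℝ => Real.exp (-2 * (s + c) ^ 2 * K))
      (Real.exp (-2 * (t + c) ^ 2 * K) * (-4 * (t + c) * K)) t := by
  have h1 : HasDerivAt (fun s : ℝ => -2 * (s + c) ^ 2 * K) (-4 * (t + c) * K) t := by
    have : HasDerivAt (fun s : ℝ => s + c) 1 t := (hasDerivAt_id t).add_const c
    have hp := (this.pow 2)
    have := (hp.const_mul (-2)).mul_const K
    exact this.congr_deriv (by rw [show (2:ℕ) - 1 = 1 from rfl]; push_cast; ring)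
  exact h1.exp

private lemma g_anti (K δ : ℝ) (hδ : 0 < δ) (hK : 1 / (4 * δ ^ 2) < K) :
    AntitoneOn (fun t : ℝ => t * Real.exp (-2 * t ^ 2 * K)) (Set.Ici δ) := by
  have hK0 : 0 < K := lt_trans (by positivity) hK
  have hd : ∀ t : ℝ, HasDerivAt (fun t : ℝ => t * Real.exp (-2 * t ^ 2 * K))
      (Real.exp (-2 * t ^ 2 * K) * (1 - 4 * K * t ^ 2)) t := by
    intro t
    have he := hasDerivAt_exp_sq K 0 t
    simp only [add_zero] at he
    have := (hasDerivAt_id t).mul he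
    exact this.congr_deriv (by simp only [id]; ring)
  apply antitoneOn_of_deriv_nonpos (convex_Ici δ)
  · exact (Continuous.continuousOn (by continuity))
  · intro t _
    exact (hd t).differentiableAt.differentiableWithinAt
  · intro t ht
    rw [interior_Ici] at ht
    rw [(hd t).deriv]
    have hδt : δ < t := ht
    have h1 : 1 < 4 * K * t ^ 2 := by
      have h2 : 1 < 4 * δ ^ 2 * K := by
        rw [div_lt_iff₀ (by positivity)] at hK; linarith
      nlinarith [sq_nonneg (t - δ)]
    have := Real.exp_pos (-2 * t ^ 2 * K)
    nlinarith

/-- Shifting weight `z` from the smaller value `y` to the larger value `x`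
increases the sum of the two exponential terms: if `δ > 0`, `α ≥ x + z`,
`0 ≤ z ≤ y ≤ x`, and `K > 1/(4δ²)`, then
`exp(-2(δ+α-x-z)²K) + exp(-2(δ+α-y+z)²K) ≥ exp(-2(δ+α-x)²K) + exp(-2(δ+α-y)²K)`. -/
theorem exp_sum_shift_increases
    (δ α x y z K : ℝ) (hδ : 0 < δ) (hz : 0 ≤ z) (hzy : z ≤ y) (hyx : y ≤ x)
    (hα : x + z ≤ α) (hK : 1 / (4 * δ ^ 2) < K) :
    Real.exp (-2 * (δ + α - x) ^ 2 * K) + Real.exp (-2 * (δ + α - y) ^ 2 * K) ≤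
      Real.exp (-2 * (δ + α - x - z) ^ 2 * K) + Real.exp (-2 * (δ + α - y + z) ^ 2 * K) := by
  have hK0 : 0 < K := lt_trans (by positivity) hK
  have hg := g_anti K δ hδ hK
  -- F t = exp(-2t²K) - exp(-2(t+z)²K) is antitone on [δ, ∞)
  set F : ℝ → ℝ := fun t => Real.exp (-2 * t ^ 2 * K) - Real.exp (-2 * (t + z) ^ 2 * K) with hF
  have hd : ∀ t : ℝ, HasDerivAt F
      (Real.exp (-2 * t ^ 2 * K) * (-4 * t * K)
        - Real.exp (-2 * (t + z) ^ 2 * K) * (-4 * (t + z) * K)) t := by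
    intro t
    have h1 := hasDerivAt_exp_sq K 0 t
    simp only [add_zero] at h1
    exact h1.sub (hasDerivAt_exp_sq K z t)
  have hFanti : AntitoneOn F (Set.Ici δ) := by
    apply antitoneOn_of_deriv_nonpos (convex_Ici δ)
    · exact (Continuous.continuousOn (by continuity))
    · intro t _; exact (hd t).differentiableAt.differentiableWithinAt
    · intro t ht
      rw [interior_Ici] at ht
      rw [(hd t).deriv]
      have ht' : δ ≤ t := le_of_lt ht
      have h1 : (t + z) * Real.exp (-2 * (t + z) ^ 2 * K)
          ≤ t * Real.exp (-2 * t ^ 2 * K) :=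
        hg ht' (by simp only [mem_Ici]; linarith) (by linarith)
      nlinarith
  -- apply F (δ+α-x-z) ≥ F (δ+α-y)
  have ha : δ + α - x - z ∈ Set.Ici δ := by simp only [mem_Ici]; linarith
  have hb : δ + α - y ∈ Set.Ici δ := by simp only [mem_Ici]; linarith
  have hab : δ + α - x - z ≤ δ + α - y := by linarith
  have := hFanti ha hb hab
  simp only [hF] at this
  have e1 : δ + α - x - z + z = δ + α - x := by ring
  rw [e1] at this
  linarith
end

section
/- Let P* be the canonical longest path in DAG G_c, and let b be a block on a path P from b⁰ to b* containing b. Let b₁ be the last node on P preceding (or equal to) b that is on P*, and b₂ the first node on P following (or equal to) b that is on P*. If the total number of internal nodes on the P-segment and the P*-segment between b₁ and b₂ is less than N_ℓ, then b lies on an N_ℓ-almost-optimal path, namely the path that follows P* to b₁, follows P from b₁ to b₂, and then follows P* again; hence b is N_ℓ-acceptable. -/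
/-- A path in a directed graph `adj` from `s` to `t`, represented as a nonempty list of
vertices starting at `s`, ending at `t`, with consecutive vertices related by `adj`. -/
def IsPath {V : Type*} (adj : V → V → Prop) (s t : V) (l : List V) : Prop :=
  l ≠ [] ∧ l.head? = some s ∧ l.getLast? = some t ∧ l.Chain' adj

/-- Splicing lemma for acceptability: let `P*` be the canonical longest path from
`b⁰` to `b*`, and let `b` lie on the segment between `b₁` and `b₂` of another
`b⁰`–`b*` path `P`, where `b₁` and `b₂` are on `P*`. If the total number of internal
nodes on the two segments between `b₁` and `b₂` is less than `Nℓ`, then `b` lies on an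
`Nℓ`-almost-optimal path (symmetric difference with `P*` has fewer than `Nℓ` nodes),
i.e. `b` is `Nℓ`-acceptable. -/
theorem block_on_almost_optimal_path
    {V : Type*} [DecidableEq V] (adj : V → V → Prop) (b0 bstar b b₁ b₂ : V)
    (Nℓ : ℕ) (Pstar P A B A' B' Mstar M : List V)
    (hPstar : IsPath adj b0 bstar Pstar)
    (hlongest : ∀ Q, IsPath adj b0 bstar Q → Q.length ≤ Pstar.length)
    (hP : IsPath adj b0 bstar P)
    (hdecPstar : Pstar = A ++ b₁ :: (Mstar ++ b₂ :: B))
    (hdecP : P = A' ++ b₁ :: (M ++ b₂ :: B'))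
    (hb : b ∈ b₁ :: (M ++ [b₂]))
    (hnodup : Pstar.Nodup)
    (hMint : ∀ x ∈ M, x ∉ Pstar)
    (hcount : M.length + Mstar.length < Nℓ) :
    ∃ Q : List V, IsPath adj b0 bstar Q ∧
      (symmDiff Q.toFinset Pstar.toFinset).card < Nℓ ∧ b ∈ Q := by
  obtain ⟨hne, hhead, hlast, hchain⟩ := hPstar
  obtain ⟨hne', hhead', hlast', hchain'⟩ := hP
  refine ⟨A ++ b₁ :: (M ++ b₂ :: B), ⟨by simp, ?_, ?_, ?_⟩, ?_, ?_⟩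
  · -- head
    rw [hdecPstar] at hhead
    cases A <;> simpa using hhead
  · -- last
    have key : ∀ L : List V, (L ++ b₂ :: B).getLast? = (b₂ :: B).getLast? := by
      intro L
      rw [List.getLast?_append]
      obtain ⟨y, hy⟩ := Option.isSome_iff_exists.mp (List.getLast?_isSome.2 (by simp : (b₂ :: B) ≠ []))
      simp [hy]
    rw [hdecPstar] at hlast
    rw [show A ++ b₁ :: (Mstar ++ b₂ :: B) = (A ++ b₁ :: Mstar) ++ b₂ :: B by simp, key] at hlast
    rw [show A ++ b₁ :: (M ++ b₂ :: B) = (A ++ b₁ :: M) ++ b₂ :: B by simp, key]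
    exact hlast
  · -- chain
    rw [hdecPstar] at hchain
    rw [hdecP] at hchain'
    rw [List.Chain', List.isChain_append] at hchain
    obtain ⟨hA, hrest, hlink⟩ := hchain
    rw [show b₁ :: (Mstar ++ b₂ :: B) = (b₁ :: Mstar) ++ b₂ :: B by simp,
      List.isChain_append] at hrest
    obtain ⟨-, hB, -⟩ := hrest
    rw [List.Chain', List.isChain_append] at hchain'
    obtain ⟨-, hrest', -⟩ := hchain'
    rw [show b₁ :: (M ++ b₂ :: B') = (b₁ :: M) ++ b₂ :: B' by simp,
      List.isChain_append] at hrest'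
    obtain ⟨hM, -, hlink'⟩ := hrest'
    rw [List.Chain', List.isChain_append]
    refine ⟨hA, ?_, by simpa using hlink⟩
    rw [show b₁ :: (M ++ b₂ :: B) = (b₁ :: M) ++ b₂ :: B by simp,
      List.isChain_append]
    exact ⟨hM, hB, by simpa using hlink'⟩
  · -- card
    have hsub : symmDiff (A ++ b₁ :: (M ++ b₂ :: B)).toFinset Pstar.toFinset ⊆
        M.toFinset ∪ Mstar.toFinset := by
      intro x hx
      rw [Finset.mem_symmDiff] at hx
      simp only [Finset.mem_union, List.mem_toFinset] at *
      rcases hx with ⟨hxQ, hxP⟩ | ⟨hxP, hxQ⟩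
      · simp only [List.mem_append, List.mem_cons, List.mem_toFinset] at hxQ
        rcases hxQ with h | h | h | h | h
        · exact absurd (by rw [hdecPstar]; simp [h]) hxP
        · exact absurd (by rw [hdecPstar]; simp [h]) hxP
        · exact Or.inl h
        · exact absurd (by rw [hdecPstar]; simp [h]) hxP
        · exact absurd (by rw [hdecPstar]; simp [h]) hxP
      · rw [hdecPstar] at hxP
        simp only [List.mem_append, List.mem_cons, List.mem_toFinset] at hxP hxQ
        push_neg at hxQ
        rcases hxP with h | h | h | h | h
        · exact absurd h hxQ.1
        · exact absurd h hxQ.2.1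
        · exact Or.inr h
        · exact absurd h hxQ.2.2.2.1
        · exact absurd h hxQ.2.2.2.2
    calc (symmDiff (A ++ b₁ :: (M ++ b₂ :: B)).toFinset Pstar.toFinset).card
        ≤ (M.toFinset ∪ Mstar.toFinset).card := Finset.card_le_card hsub
      _ ≤ M.toFinset.card + Mstar.toFinset.card := Finset.card_union_le _ _
      _ ≤ M.length + Mstar.length :=
          Nat.add_le_add (List.toFinset_card_le M) (List.toFinset_card_le Mstar)
      _ < Nℓ := hcount
  · -- membership
    simp only [List.mem_cons, List.mem_append, List.mem_singleton] at hb ⊢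
    tauto
end

section
/- If every subinterval of length at least L of [0, T] containing at least N_ℓ color-c blocks has the property that at least a fraction (1−δ_f) of color-c blocks are honest-and-unforked, and the honest-and-unforked color-c blocks are totally ordered by the ancestor relation (form a chain), then any path Q in the color-c minor between two consecutive chain blocks b₁ (time t₁) and b₂ (time t₂) that avoids the chain has length strictly less than the number of honest-and-unforked blocks generated in (t₁, t₂); in particular a longest path cannot bypass more than a minority of honest blocks. -/
/-- Suppose each round generates at most one block (`time` is injective), the
honest-and-unforked blocks form a chain under the ancestor relation, and in the
window `(t₁, t₂)` (which contains at least `Nℓ > 0` color-`c` blocks) at least a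
fraction `1 - δf > 1/2` of the blocks are honest-and-unforked. Then any path `Q`
between consecutive chain blocks `b₁` (time `t₁`) and `b₂` (time `t₂`) that avoids
the chain has length strictly less than the number of honest-and-unforked blocks
generated strictly between `t₁` and `t₂`. -/
theorem bypass_path_shorter_than_honest_chain
    {B : Type*} [Fintype B] [DecidableEq B]
    (adj : B → B → Prop) (time : B → ℕ) (good : B → Prop) [DecidablePred good]
    (t₁ t₂ Nℓ : ℕ) (δf : ℝ) (hδf0 : 0 ≤ δf) (hδf : δf < 1 / 2) (hNℓ : 0 < Nℓ)
    (hinj : Function.Injective time)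
    (hchain : ∀ b b', good b → good b' → b ≠ b' →
      Relation.TransGen adj b b' ∨ Relation.TransGen adj b' b)
    (hwindow : Nℓ ≤ (Finset.univ.filter (fun b => t₁ < time b ∧ time b < t₂)).card)
    (hfrac : (1 - δf) *
        ((Finset.univ.filter (fun b => t₁ < time b ∧ time b < t₂)).card : ℝ) ≤
        ((Finset.univ.filter (fun b => good b ∧ t₁ < time b ∧ time b < t₂)).card : ℝ))
    (b₁ b₂ : B) (hb₁ : good b₁) (hb₂ : good b₂)
    (ht₁ : time b₁ = t₁) (ht₂ : time b₂ = t₂)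
    (Q : List B) (hQpath : (b₁ :: (Q ++ [b₂])).Chain' adj) (hQnodup : Q.Nodup)
    (hQmem : ∀ b ∈ Q, ¬ good b ∧ t₁ < time b ∧ time b < t₂) :
    Q.length <
      (Finset.univ.filter (fun b => good b ∧ t₁ < time b ∧ time b < t₂)).card := by
  classical
  set s := Finset.univ.filter (fun b => t₁ < time b ∧ time b < t₂) with hs
  set g := Finset.univ.filter (fun b => good b ∧ t₁ < time b ∧ time b < t₂) with hg
  set bad := Finset.univ.filter (fun b => ¬ good b ∧ t₁ < time b ∧ time b < t₂) with hbad
  have hQ : Q.length ≤ bad.card := by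
    rw [← List.toFinset_card_of_nodup hQnodup]
    apply Finset.card_le_card
    intro b hb
    simp only [hbad, Finset.mem_filter, Finset.mem_univ, true_and]
    exact hQmem b (List.mem_toFinset.mp hb)
  have hsplit : g.card + bad.card = s.card := by
    have hg' : g = s.filter (fun b => good b) := by
      ext b; simp [hs, hg]; tauto
    have hbad' : bad = s.filter (fun b => ¬ good b) := by
      ext b; simp [hs, hbad]; tauto
    rw [hg', hbad']
    exact Finset.card_filter_add_card_filter_not (fun b => good b)
  have hspos : 0 < s.card := lt_of_lt_of_le hNℓ hwindow
  have hlt : bad.card < g.card := by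
    have h2 : (s.card : ℝ) < 2 * g.card := by
      have : (1 / 2 : ℝ) * s.card < (1 - δf) * s.card := by
        apply mul_lt_mul_of_pos_right _ (by exact_mod_cast hspos)
        linarith
      nlinarith
    have : (bad.card : ℝ) < g.card := by
      have hc : (g.card : ℝ) + bad.card = s.card := by exact_mod_cast hsplit
      linarith
    exact_mod_cast this
  omega
end
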